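/- The bags C = C⁻ ∪ C⁺ ranging over public nodes C⁻, with edges between bags C₁ and C₂ when one contains a parent of a node of the other, form a valid tree decomposition of the dependency hypergraph of the realization-plan constraint system: every constraint's variables lie in a single bag, and each tree node appears in exactly the bags forming a nonempty connected subtree (at most two adjacent bags). -/

import Mathlib

/-- Ancestor relation generated by a parent map. -/
def anc {H : Type*} (par : H → Option H) : H → H → Prop :=
  Relation.ReflTransGen (fun g h => par h = some g)

/-- `h ⪯ I` : `h` has a descendant in `I`. -/
def precedesSet {H : Type*} (par : H → Option H) (h : H) (I : Set H) : Prop :=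
  ∃ g ∈ I, anc par h g

/-- The relation `∼` on nodes of the game tree. -/
def simRel {H : Type*} (par : H → Option H) (depth : H → ℕ)
    (infosets : Set (Set H)) (h₁ h₂ : H) : Prop :=
  depth h₁ = depth h₂ ∧ ∃ I ∈ infosets, precedesSet par h₁ I ∧ precedesSet par h₂ I

/-- The setoid of public nodes. -/
def pubSetoid {H : Type*} (par : H → Option H) (depth : H → ℕ)
    (infosets : Set (Set H)) : Setoid H :=
  ⟨Relation.EqvGen (simRel par depth infosets),
   Relation.EqvGen.is_equivalence _⟩

/-- The graph on public nodes/bags: an edge when one bag contains a parent of a node of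
the other. -/
def publicGraph {H : Type*} (par : H → Option H) (depth : H → ℕ)
    (infosets : Set (Set H)) :
    SimpleGraph (Quotient (pubSetoid par depth infosets)) :=
  SimpleGraph.fromRel (fun q₁ q₂ => ∃ h g : H, par h = some g ∧
    Quotient.mk (pubSetoid par depth infosets) g = q₁ ∧
    Quotient.mk (pubSetoid par depth infosets) h = q₂)

/-- The bag `C = C⁻ ∪ C⁺` of a public node `q`: the nodes of the public node together
with all their children. -/
def publicBag {H : Type*} (par : H → Option H) (depth : H → ℕ)
    (infosets : Set (Set H)) (q : Quotient (pubSetoid par depth infosets)) : Set H :=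
  {h | Quotient.mk (pubSetoid par depth infosets) h = q} ∪
  {h | ∃ g, par h = some g ∧ Quotient.mk (pubSetoid par depth infosets) g = q}

/-- The hyperedges of the dependency hypergraph of the realization-plan constraint
system: one hyperedge `{h} ∪ children(h)` for each team decision node `h`; one
hyperedge `{h, ha}` for each other nonterminal node `h` and child `ha`; and one
hyperedge `{ha, h', h'a, h}` for each team infoset `I`, nodes `h, h' ∈ I` and common
action label `a` (from the bilinear constraint `x(ha)x(h') = x(h'a)x(h)`). -/
def depHyperedges {H A : Type*} (par : H → Option H) (lab : H → A)
    (plus : H → Prop) (infosets : Set (Set H)) : Set (Set H) :=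
  {e | ∃ h, plus h ∧ (∃ k, par k = some h) ∧ e = insert h {k | par k = some h}} ∪
  {e | ∃ h k, ¬ plus h ∧ par k = some h ∧ e = {h, k}} ∪
  {e | ∃ I ∈ infosets, ∃ h ∈ I, ∃ h' ∈ I, ∃ k k',
        par k = some h ∧ par k' = some h' ∧ lab k = lab k' ∧ e = {k, h', k', h}}

open SimpleGraph

lemma acyclic_of_parent {V : Type*} (G : SimpleGraph V) (f : V → ℕ) (P : V → Option V)
    (hGP : ∀ a b, G.Adj a b → (P a = some b ∧ f b < f a) ∨ (P b = some a ∧ f a < f b)) :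
    G.IsAcyclic := by
  intro v c hc
  classical
  have hne : c.support ≠ [] := c.support_ne_nil
  obtain ⟨u, hu⟩ : ∃ u, u ∈ c.support.argmax f := by
    cases h : c.support.argmax f with
    | none => exact absurd (List.argmax_eq_none.mp h) hne
    | some u => exact ⟨u, by simp [h]⟩
  have humem : u ∈ c.support := List.argmax_mem hu
  have hmax : ∀ x ∈ c.support, f x ≤ f u := fun x hx => List.le_of_mem_argmax hx hu
  set c' := c.rotate u humem with hc'def
  have hc' : c'.IsCycle := hc.rotate humem
  have hsub : ∀ x ∈ c'.support, f x ≤ f u := by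
    intro x hx
    rcases List.mem_cons.mp (by rw [← c'.support_eq_cons]; exact hx) with h | h
    · exact h ▸ le_refl _
    · exact hmax x (List.mem_of_mem_tail
        (((Walk.support_rotate c u humem).mem_iff).mp h))
  clear_value c'
  cases c' with
  | nil => exact hc'.not_nil Walk.nil_nil
  | @cons _ a _ hadj p =>
    have hfa : f a ≤ f u := hsub a (by simp)
    have hPa : P u = some a := by
      rcases hGP u a hadj with ⟨h1, _⟩ | ⟨_, h2⟩
      · exact h1
      · omega
    have hneu : u ≠ a := hadj.ne
    obtain ⟨b, hadj', q, hq⟩ := Walk.exists_eq_cons_of_ne hneu p.reverse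
    have hbmem : b ∈ p.support := by
      have : b ∈ p.reverse.support := by rw [hq]; simp
      rwa [Walk.support_reverse, List.mem_reverse] at this
    have hfb : f b ≤ f u := hsub b (by simp [hbmem])
    have hPb : P u = some b := by
      rcases hGP u b hadj' with ⟨h1, _⟩ | ⟨_, h2⟩
      · exact h1
      · omega
    have hab : a = b := Option.some_injective _ (hPa.symm.trans hPb)
    have hedge : s(u, b) ∈ p.edges := by
      have : s(u, b) ∈ p.reverse.edges := by rw [hq]; simp
      rwa [Walk.edges_reverse, List.mem_reverse] at this
    have hnodup := hc'.edges_nodup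
    rw [Walk.edges_cons, List.nodup_cons] at hnodup
    exact hnodup.1 (hab ▸ hedge)

section Main

variable {H : Type*} (par : H → Option H) (depth : H → ℕ) (infosets : Set (Set H))

local notation "mk" => Quotient.mk (pubSetoid par depth infosets)

lemma eqv_depth (h h' : H) (e : Relation.EqvGen (simRel par depth infosets) h h') :
    depth h = depth h' := by
  induction e with
  | rel _ _ hr => exact hr.1
  | refl => rfl
  | symm _ _ _ ih => exact ih.symm
  | trans _ _ _ _ _ ih1 ih2 => exact ih1.trans ih2

lemma precedes_parent {h g : H} {I : Set H} (hp : par h = some g)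
    (hpre : precedesSet par h I) : precedesSet par g I := by
  obtain ⟨x, hx, hanc⟩ := hpre
  exact ⟨x, hx, Relation.ReflTransGen.head hp hanc⟩

lemma sim_parent {h h' g g' : H} (hs : simRel par depth infosets h h')
    (hdepth : ∀ h g : H, par h = some g → depth h = depth g + 1)
    (hp : par h = some g) (hp' : par h' = some g') :
    simRel par depth infosets g g' := by
  obtain ⟨hd, I, hI, h1, h2⟩ := hs
  refine ⟨?_, I, hI, precedes_parent par hp h1, precedes_parent par hp' h2⟩
  have := hdepth h g hp
  have := hdepth h' g' hp'
  omega

lemma eq_root_of_depth_zero (root : H) (hdroot : depth root = 0)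
    (hdepth : ∀ h g : H, par h = some g → depth h = depth g + 1)
    (hpar : ∀ h : H, h ≠ root → (par h).isSome)
    (h : H) (h0 : depth h = 0) : h = root := by
  by_contra hne
  obtain ⟨g, hg⟩ := Option.isSome_iff_exists.mp (hpar h hne)
  have := hdepth h g hg
  omega

lemma eqv_par (root : H) (hdroot : depth root = 0)
    (hdepth : ∀ h g : H, par h = some g → depth h = depth g + 1)
    (hpar : ∀ h : H, h ≠ root → (par h).isSome)
    (h h' : H) (e : Relation.EqvGen (simRel par depth infosets) h h') :
    (par h).map (mk) = (par h').map (mk) := by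
  induction e with
  | refl => rfl
  | symm _ _ _ ih => exact ih.symm
  | trans _ _ _ _ _ ih1 ih2 => exact ih1.trans ih2
  | rel a b hr =>
    by_cases h0 : depth a = 0
    · have ha := eq_root_of_depth_zero par depth root hdroot hdepth hpar a h0
      have hb := eq_root_of_depth_zero par depth root hdroot hdepth hpar b (hr.1 ▸ h0)
      rw [ha, hb]
    · have hane : a ≠ root := fun hh => h0 (hh ▸ hdroot)
      have hbne : b ≠ root := fun hh => h0 (hr.1.trans (hh ▸ hdroot))
      obtain ⟨g, hg⟩ := Option.isSome_iff_exists.mp (hpar a hane)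
      obtain ⟨g', hg'⟩ := Option.isSome_iff_exists.mp (hpar b hbne)
      rw [hg, hg', Option.map_some, Option.map_some]
      exact congrArg some (Quotient.sound
        (Relation.EqvGen.rel _ _ (sim_parent par depth infosets hr hdepth hg hg')))

lemma depth_q (q : Quotient (pubSetoid par depth infosets)) (h : H)
    (hq : mk h = q) : depth q.out = depth h :=
  eqv_depth par depth infosets _ _ (Quotient.exact (q.out_eq.trans hq.symm))

end Main

/-- The bags `C = C⁻ ∪ C⁺` over public nodes `C⁻`, with edges between
bags when one contains a parent of a node of the other, form a valid tree decomposition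
of the dependency hypergraph of the realization-plan constraint system: the graph is a
tree, every constraint's variables lie in a single bag, and each game-tree node appears
in a nonempty connected set of bags of size at most two. -/
theorem stmt7 {H A : Type*} [Fintype H] (par : H → Option H) (lab : H → A)
    (depth : H → ℕ) (plus : H → Prop) (infosets : Set (Set H)) (root : H)
    (hthin : ∀ I ∈ infosets, ∀ h ∈ I, ∀ h' ∈ I, depth h = depth h')
    (hplus : ∀ I ∈ infosets, ∀ h ∈ I, plus h)
    (hsameact : ∀ I ∈ infosets, ∀ h ∈ I, ∀ h' ∈ I, ∀ k, par k = some h →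
      ∃ k', par k' = some h' ∧ lab k' = lab k)
    (hroot : par root = none) (hdroot : depth root = 0)
    (hdepth : ∀ h g : H, par h = some g → depth h = depth g + 1)
    (hpar : ∀ h : H, h ≠ root → (par h).isSome) :
    (publicGraph par depth infosets).IsTree ∧
    (∀ e ∈ depHyperedges par lab plus infosets,
      ∃ q, e ⊆ publicBag par depth infosets q) ∧
    (∀ h : H,
      (∃ q, h ∈ publicBag par depth infosets q) ∧
      ((publicGraph par depth infosets).induce
        {q | h ∈ publicBag par depth infosets q}).Connected ∧
      {q | h ∈ publicBag par depth infosets q}.encard ≤ 2) := by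
  classical
  set Qm := Quotient.mk (pubSetoid par depth infosets) with hQm
  set G := publicGraph par depth infosets with hGdef
  -- distinct classes for parent/child
  have hQne : ∀ {h g : H}, par h = some g → Qm g ≠ Qm h := by
    intro h g hp heq
    have := eqv_depth par depth infosets g h (Quotient.exact heq)
    have := hdepth h g hp
    omega
  have hadjpar : ∀ {h g : H}, par h = some g → G.Adj (Qm g) (Qm h) := by
    intro h g hp
    rw [hGdef, publicGraph, SimpleGraph.fromRel_adj]
    exact ⟨hQne hp, Or.inl ⟨h, g, hp, rfl, rfl⟩⟩
  -- tree
  have htree : G.IsTree := by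
    constructor
    · -- connected
      have hreach : ∀ n (q : Quotient (pubSetoid par depth infosets)),
          depth q.out ≤ n → G.Reachable (Qm root) q := by
        intro n
        induction n with
        | zero =>
          intro q hq
          have h0 : q.out = root := eq_root_of_depth_zero par depth root hdroot hdepth
            hpar q.out (Nat.le_zero.mp hq)
          have : Qm root = q := by rw [← h0]; exact q.out_eq
          exact this ▸ SimpleGraph.Reachable.refl _
        | succ n ih =>
          intro q hq
          by_cases h0 : q.out = root
          · have : Qm root = q := by rw [← h0]; exact q.out_eq
            exact this ▸ SimpleGraph.Reachable.refl _
          · obtain ⟨g, hg⟩ := Option.isSome_iff_exists.mp (hpar q.out h0)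
            have hadj : G.Adj (Qm g) (Qm q.out) := hadjpar hg
            have houteq : Qm q.out = q := q.out_eq
            have hd : depth (Qm g).out ≤ n := by
              have h1 : depth (Qm g).out = depth g :=
                depth_q par depth infosets (Qm g) g rfl
              have := hdepth q.out g hg
              omega
            exact (ih (Qm g) hd).trans (houteq ▸ hadj.reachable)
      have hpre : G.Preconnected := fun u v =>
        ((hreach _ u le_rfl).symm.trans (hreach _ v le_rfl))
      have : Nonempty (Quotient (pubSetoid par depth infosets)) := ⟨Qm root⟩
      exact ⟨hpre⟩
    · -- acyclic
      refine acyclic_of_parent G (fun q => depth q.out)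
        (fun q => (par q.out).map Qm) ?_
      intro a b hab
      rw [hGdef, publicGraph, SimpleGraph.fromRel_adj] at hab
      obtain ⟨hne, ⟨h, g, hp, hga, hhb⟩ | ⟨h, g, hp, hgb, hha⟩⟩ := hab
      · right
        constructor
        · have := eqv_par par depth infosets root hdroot hdepth hpar b.out h
            (Quotient.exact (b.out_eq.trans hhb.symm))
          rw [← hQm] at this
          show Option.map Qm (par b.out) = some a
          rw [this, hp, Option.map_some]
          exact congrArg some hga
        · have h1 : depth a.out = depth g := depth_q par depth infosets a g hga
          have h2 : depth b.out = depth h := depth_q par depth infosets b h hhb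
          have := hdepth h g hp
          show depth a.out < depth b.out
          omega
      · left
        constructor
        · have := eqv_par par depth infosets root hdroot hdepth hpar a.out h
            (Quotient.exact (a.out_eq.trans hha.symm))
          rw [← hQm] at this
          show Option.map Qm (par a.out) = some b
          rw [this, hp, Option.map_some]
          exact congrArg some hgb
        · have h1 : depth b.out = depth g := depth_q par depth infosets b g hgb
          have h2 : depth a.out = depth h := depth_q par depth infosets a h hha
          have := hdepth h g hp
          show depth b.out < depth a.out
          omega
  refine ⟨htree, ?_, ?_⟩
  · -- hyperedges fit in bags
    intro e he
    rcases he with (⟨h, _, _, rfl⟩ | ⟨h, k, _, hk, rfl⟩) | he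
    · refine ⟨Qm h, fun x hx => ?_⟩
      rcases Set.mem_insert_iff.mp hx with rfl | hx
      · exact Or.inl rfl
      · exact Or.inr ⟨h, hx, rfl⟩
    · refine ⟨Qm h, fun x hx => ?_⟩
      rcases hx with rfl | hx
      · exact Or.inl rfl
      · exact Or.inr ⟨h, (Set.mem_singleton_iff.mp hx) ▸ hk, rfl⟩
    · obtain ⟨I, hI, h, hh, h', hh', k, k', hk, hk', _, rfl⟩ := he
      have hhh' : Qm h' = Qm h := Quotient.sound (Relation.EqvGen.rel _ _
        ⟨hthin I hI h' hh' h hh, I, hI, ⟨h', hh', Relation.ReflTransGen.refl⟩,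
          ⟨h, hh, Relation.ReflTransGen.refl⟩⟩)
      refine ⟨Qm h, fun x hx => ?_⟩
      rcases hx with rfl | rfl | rfl | hx
      · exact Or.inr ⟨h, hk, rfl⟩
      · exact Or.inl hhh'
      · exact Or.inr ⟨h', hk', hhh'⟩
      · exact Or.inl (congrArg Qm (Set.mem_singleton_iff.mp hx))
  · -- bags containing a node
    intro h
    cases hph : par h with
    | none =>
      have hT : {q | h ∈ publicBag par depth infosets q} = {Qm h} := by
        ext q
        simp only [publicBag, Set.mem_setOf_eq, Set.mem_union, Set.mem_singleton_iff, hph]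
        constructor
        · rintro (rfl | ⟨g, hg, _⟩)
          · rfl
          · simp at hg
        · rintro rfl; exact Or.inl rfl
      refine ⟨⟨Qm h, Or.inl rfl⟩, ?_, ?_⟩
      · rw [hT]
        haveI : Nonempty ↑({Qm h} : Set (Quotient (pubSetoid par depth infosets))) :=
          ⟨⟨Qm h, rfl⟩⟩
        refine ⟨fun u v => ?_⟩
        have huv : u = v := Subtype.ext (u.2.trans v.2.symm)
        exact huv ▸ SimpleGraph.Reachable.refl _
      · rw [hT, Set.encard_singleton]; norm_num
    | some g =>
      have hadj : G.Adj (Qm g) (Qm h) := hadjpar hph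
      have hT : {q | h ∈ publicBag par depth infosets q} = {Qm h, Qm g} := by
        ext q
        simp only [publicBag, Set.mem_setOf_eq, Set.mem_union, Set.mem_insert_iff,
          Set.mem_singleton_iff, hph]
        constructor
        · rintro (rfl | ⟨g', hg', rfl⟩)
          · exact Or.inl rfl
          · exact Or.inr (congrArg Qm (Option.some_injective _ hg')).symm
        · rintro (rfl | rfl)
          · exact Or.inl rfl
          · exact Or.inr ⟨g, rfl, rfl⟩
      refine ⟨⟨Qm h, Or.inl rfl⟩, ?_, ?_⟩
      · rw [hT]
        haveI : Nonempty ↑({Qm h, Qm g} : Set (Quotient (pubSetoid par depth infosets))) :=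
          ⟨⟨Qm h, Or.inl rfl⟩⟩
        refine ⟨fun u v => ?_⟩
        by_cases huv : (u : Quotient (pubSetoid par depth infosets)) = v
        · exact (Subtype.ext huv) ▸ SimpleGraph.Reachable.refl _
        · have hadj' : (G.induce {Qm h, Qm g}).Adj u v ∨ (G.induce {Qm h, Qm g}).Adj v u := by
            rcases u.2 with hu | hu <;> rcases v.2 with hv | hv
            · exact absurd (hu.trans hv.symm) huv
            · refine Or.inr ?_
              show G.Adj (v : Quotient (pubSetoid par depth infosets)) (u : Quotient (pubSetoid par depth infosets))
              rw [hu, hv]; exact hadj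
            · refine Or.inl ?_
              show G.Adj (u : Quotient (pubSetoid par depth infosets)) (v : Quotient (pubSetoid par depth infosets))
              rw [hu, hv]; exact hadj
            · exact absurd (hu.trans hv.symm) huv
          rcases hadj' with ha | ha
          · exact ha.reachable
          · exact ha.symm.reachable
      · rw [hT]
        exact (Set.encard_insert_le _ _).trans (by rw [Set.encard_singleton]; norm_num)
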